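/- (Loosened random coding union bound, memoryless Lee channel.) Let q ≥ 2, n ≥ 1, M ≥ 2 be integers, let 0 < δ ≤ δ_q, and set R₂ = (log₂ M)/n. Fix x ∈ Z_q^n, let E = (E_1,…,E_n) have i.i.d. entries with distribution B_δ, set y = x + E and L = w_L(E), and let X̃_2,…,X̃_M be independent random vectors uniform on Z_q^n, independent of E. Then P(∃ j ∈ {2,…,M} : w_L(y − X̃_j) ≤ L) ≤ E[ 2^{−n [log₂ q − H⁺_{L/n} − R₂]⁺} ], where the expectation is over the random Lee weight L. -/

import Mathlib

/-- The Lee weight of the residue `i ∈ {0,…,q-1}` is `min(i, q-i)`. -/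
def leeW (q i : ℕ) : ℕ := min i (q - i)

/-- The Lee weight of a vector over `Z_q`. -/
def leeWtV {q n : ℕ} (x : Fin n → ZMod q) : ℕ :=
  ∑ k, min (x k).val (q - (x k).val)

/-- `Σ_{i∈Z_q} w_L(i) e^{-β w_L(i)}`. -/
noncomputable def numFun (q : ℕ) (β : ℝ) : ℝ :=
  ∑ i ∈ Finset.range q, (leeW q i : ℝ) * Real.exp (-β * (leeW q i : ℝ))

/-- The normalization constant `Z(β) = Σ_{i∈Z_q} e^{-β w_L(i)}`. -/
noncomputable def Zfun (q : ℕ) (β : ℝ) : ℝ :=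
  ∑ i ∈ Finset.range q, Real.exp (-β * (leeW q i : ℝ))

/-- The Boltzmann pmf on `Z_q` with parameter `β`. -/
noncomputable def boltz (q : ℕ) (β : ℝ) (i : ℕ) : ℝ :=
  Real.exp (-β * (leeW q i : ℝ)) / Zfun q β

/-- Shannon entropy (base 2) of the Boltzmann distribution with parameter `β`. -/
noncomputable def entB (q : ℕ) (β : ℝ) : ℝ :=
  -∑ i ∈ Finset.range q, boltz q β i * Real.logb 2 (boltz q β i)

/-- The Boltzmann pmf on `Z_q` with parameter `β`, as a function on `ZMod q`. -/
noncomputable def boltZ (q : ℕ) (β : ℝ) (a : ZMod q) : ℝ :=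
  Real.exp (-β * (min a.val (q - a.val) : ℝ)) / Zfun q β

/-- `δ_q`, the mean Lee weight of a uniform element of `Z_q`. -/
noncomputable def deltaQ (q : ℕ) : ℝ :=
  if q % 2 = 0 then (q : ℝ) / 4 else ((q : ℝ) ^ 2 - 1) / (4 * q)

open scoped Classical in
/-- The Boltzmann parameter matched to a mean Lee weight `δ` (when it exists). -/
noncomputable def betaOf (q : ℕ) (δ : ℝ) : ℝ :=
  if h : ∃ β : ℝ, numFun q β = δ * Zfun q β then h.choose else 0

/-- `H_δ`, the entropy of the Boltzmann distribution with mean Lee weight `δ`. -/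
noncomputable def Hof (q : ℕ) (δ : ℝ) : ℝ := entB q (betaOf q δ)

/-- `H_δ⁺`: equal to `H_δ` for `0 ≤ δ ≤ δ_q`, and to `log₂ q` for `δ > δ_q`. -/
noncomputable def HplusOf (q : ℕ) (δ : ℝ) : ℝ :=
  if δ = 0 then 0 else if δ ≤ deltaQ q then Hof q δ else Real.logb 2 q

/-! ### Auxiliary lemmas -/

lemma leeW_zero (q : ℕ) : leeW q 0 = 0 := by simp [leeW]

lemma sumLee : ∀ q : ℕ, ∑ i ∈ Finset.range q, leeW q i = q * q / 4
  | 0 => by simp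
  | 1 => by simp [leeW]
  | (q+2) => by
      have h1 : ∑ i ∈ Finset.range (q+2), leeW (q+2) i
          = (∑ i ∈ Finset.range (q+1), leeW (q+2) (i+1)) + leeW (q+2) 0 :=
        Finset.sum_range_succ' _ _
      have h2 : ∀ i ∈ Finset.range (q+1), leeW (q+2) (i+1) = leeW q i + 1 := by
        intro i hi
        simp only [Finset.mem_range] at hi
        unfold leeW
        omega
      rw [h1, Finset.sum_congr rfl h2, Finset.sum_add_distrib]
      rw [Finset.sum_range_succ, sumLee q]
      have h3 : leeW q q = 0 := by unfold leeW; omega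
      have h4 : leeW (q+2) 0 = 0 := by unfold leeW; omega
      have h5 : (q+2)*(q+2) = q*q + 4*(q+1) := by ring
      simp only [h3, h4, h5, Finset.sum_const, Finset.card_range, smul_eq_mul, mul_one]
      omega

lemma deltaQ_pos {q : ℕ} (hq : 2 ≤ q) : 0 < deltaQ q := by
  unfold deltaQ
  rcases Nat.even_or_odd q with h | h
  · rw [if_pos (Nat.even_iff.mp h)]
    have : (2:ℝ) ≤ q := by exact_mod_cast hq
    linarith
  · have hodd := Nat.odd_iff.mp h
    rw [if_neg (by omega)]
    have hq3 : 3 ≤ q := by omega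
    have h1 : (3:ℝ) ≤ q := by exact_mod_cast hq3
    apply div_pos (by nlinarith) (by linarith)

lemma sumLee_real {q : ℕ} (hq : 2 ≤ q) :
    (∑ i ∈ Finset.range q, (leeW q i : ℝ)) = q * deltaQ q := by
  rw [← Nat.cast_sum, sumLee q]
  unfold deltaQ
  rcases Nat.even_or_odd q with h | h
  · obtain ⟨m, rfl⟩ := h
    rw [if_pos (by omega)]
    have h2 : (m+m)*(m+m) = 4*(m*m) := by ring
    have : (m + m) * (m + m) / 4 = m * m := by omega
    rw [this]
    push_cast
    ring
  · obtain ⟨m, rfl⟩ := h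
    rw [if_neg (by omega)]
    have h2 : (2*m+1)*(2*m+1) = 4*(m*(m+1)) + 1 := by ring
    have : (2*m+1) * (2*m+1) / 4 = m * (m+1) := by omega
    rw [this]
    have hq0 : ((2*m+1 : ℕ):ℝ) ≠ 0 := by positivity
    field_simp
    push_cast
    ring

lemma Zfun_pos {q : ℕ} (hq : 1 ≤ q) (β : ℝ) : 0 < Zfun q β :=
  Finset.sum_pos (fun i _ => Real.exp_pos _) (by simp; omega)

lemma Zfun_one_le {q : ℕ} (hq : 1 ≤ q) {β : ℝ} : 1 ≤ Zfun q β := by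
  have h0 : (0:ℕ) ∈ Finset.range q := by simp; omega
  unfold Zfun
  calc (1:ℝ) = Real.exp (-β * (leeW q 0 : ℝ)) := by rw [leeW_zero]; simp
    _ ≤ _ := Finset.single_le_sum (f := fun i => Real.exp (-β * (leeW q i : ℝ)))
      (fun i _ => (Real.exp_pos _).le) h0

lemma beta_nonneg {q : ℕ} (hq : 2 ≤ q) {δ β : ℝ} (hδ1 : δ ≤ deltaQ q)
    (hβ : numFun q β = δ * Zfun q β) : 0 ≤ β := by
  by_contra hneg
  push_neg at hneg
  set d := deltaQ q with hd
  have hd0 : 0 < d := deltaQ_pos hq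
  have hZ : 0 < Zfun q β := Zfun_pos (by omega) β
  set C := Real.exp (-β * d) with hC
  have hsum : ∑ i ∈ Finset.range q, ((leeW q i:ℝ) - d) = 0 := by
    rw [Finset.sum_sub_distrib, sumLee_real hq]
    simp [hd]
  have expand : ∑ i ∈ Finset.range q,
      ((leeW q i:ℝ) - d) * (Real.exp (-β * (leeW q i : ℝ)) - C)
      = numFun q β - d * Zfun q β := by
    calc ∑ i ∈ Finset.range q, ((leeW q i:ℝ) - d) * (Real.exp (-β * (leeW q i : ℝ)) - C)
        = ∑ i ∈ Finset.range q, (((leeW q i:ℝ) * Real.exp (-β * (leeW q i : ℝ)))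
            - d * Real.exp (-β * (leeW q i : ℝ)) - ((leeW q i:ℝ) - d) * C) := by
          apply Finset.sum_congr rfl; intros; ring
      _ = numFun q β - d * Zfun q β
            - (∑ i ∈ Finset.range q, ((leeW q i:ℝ) - d)) * C := by
          rw [Finset.sum_sub_distrib, Finset.sum_sub_distrib, ← Finset.sum_mul,
            ← Finset.mul_sum]
          rfl
      _ = numFun q β - d * Zfun q β := by rw [hsum]; ring
  have hterm : ∀ i ∈ Finset.range q,
      0 ≤ ((leeW q i:ℝ) - d) * (Real.exp (-β * (leeW q i : ℝ)) - C) := by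
    intro i _
    rcases le_total ((leeW q i : ℝ)) d with h | h
    · have h1 : (leeW q i:ℝ) - d ≤ 0 := by linarith
      have h2 : Real.exp (-β * (leeW q i : ℝ)) - C ≤ 0 := by
        have : -β * (leeW q i : ℝ) ≤ -β * d :=
          mul_le_mul_of_nonneg_left h (by linarith)
        simp only [hC, sub_nonpos]
        exact Real.exp_le_exp.mpr this
      nlinarith
    · apply mul_nonneg (by linarith)
      have : -β * d ≤ -β * (leeW q i : ℝ) :=
        mul_le_mul_of_nonneg_left h (by linarith)
      simp only [hC, sub_nonneg]
      exact Real.exp_le_exp.mpr this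
  have hpos0 : 0 < ((leeW q 0:ℝ) - d) * (Real.exp (-β * (leeW q 0 : ℝ)) - C) := by
    rw [leeW_zero]
    simp only [Nat.cast_zero, mul_zero, Real.exp_zero]
    apply mul_pos_of_neg_of_neg (by linarith)
    have : 1 < C := by
      rw [hC, ← Real.exp_zero]
      apply Real.exp_lt_exp.mpr
      nlinarith
    linarith
  have hgt : 0 < numFun q β - d * Zfun q β := by
    rw [← expand]
    exact Finset.sum_pos' hterm ⟨0, by simp; omega, hpos0⟩
  nlinarith [mul_le_mul_of_nonneg_right hδ1 hZ.le]

lemma exists_beta {q : ℕ} (hq : 2 ≤ q) {δ : ℝ} (hδ0 : 0 < δ) (hδ1 : δ ≤ deltaQ q) :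
    ∃ β : ℝ, numFun q β = δ * Zfun q β := by
  have hd0 : 0 < deltaQ q := deltaQ_pos hq
  have hq0 : (0:ℝ) < q := by positivity
  have hqd : 0 < (q:ℝ) * deltaQ q := by positivity
  set g : ℝ → ℝ := fun b => numFun q b - δ * Zfun q b with hg
  have hcont : Continuous g := by
    unfold g
    unfold numFun Zfun
    continuity
  set b : ℝ := Real.log ((q:ℝ) * deltaQ q / δ) + 1 with hb
  have hq2 : (2:ℝ) ≤ (q:ℝ) := by exact_mod_cast hq
  have harg : 1 ≤ (q:ℝ) * deltaQ q / δ := by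
    rw [le_div_iff₀ hδ0]
    nlinarith
  have hb0 : (0:ℝ) ≤ b := by
    rw [hb]
    have := Real.log_nonneg harg
    linarith
  have hg0 : 0 ≤ g 0 := by
    have h1 : numFun q 0 = (q:ℝ) * deltaQ q := by
      unfold numFun
      simp [sumLee_real hq]
    have h2 : Zfun q 0 = (q:ℝ) := by
      unfold Zfun
      simp
    simp only [hg, h1, h2]
    nlinarith
  have hgb : g b ≤ δ * Real.exp (-1) - δ := by
    have h1 : numFun q b ≤ ((q:ℝ) * deltaQ q) * Real.exp (-b) := by
      rw [← sumLee_real hq, Finset.sum_mul]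
      apply Finset.sum_le_sum
      intro i _
      rcases Nat.eq_zero_or_pos (leeW q i) with h | h
      · simp [h]
      · apply mul_le_mul_of_nonneg_left _ (by positivity)
        apply Real.exp_le_exp.mpr
        have : (1:ℝ) ≤ (leeW q i : ℝ) := by exact_mod_cast h
        nlinarith
    have h2 : Real.exp (-b) = δ / ((q:ℝ) * deltaQ q) * Real.exp (-1) := by
      rw [hb, neg_add, Real.exp_add, ← Real.log_inv, Real.exp_log (by positivity)]
      field_simp
    have h3 : ((q:ℝ) * deltaQ q) * Real.exp (-b) = δ * Real.exp (-1) := by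
      rw [h2]; field_simp
    have h4 : δ ≤ δ * Zfun q b := by
      nlinarith [Zfun_one_le (q := q) (by omega : 1 ≤ q) (β := b)]
    simp only [hg]
    linarith
  have hgb' : g b ≤ 0 := by
    have : Real.exp (-1) < 1 := by
      rw [← Real.exp_zero]; exact Real.exp_lt_exp.mpr (by norm_num)
    nlinarith
  have := intermediate_value_Icc' hb0 hcont.continuousOn
  have h0mem : (0:ℝ) ∈ Set.Icc (g b) (g 0) := ⟨hgb', hg0⟩
  obtain ⟨c, _, hc⟩ := this h0mem
  exact ⟨c, by simp only [hg] at hc; linarith⟩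

lemma entB_eq {q : ℕ} (hq : 1 ≤ q) {δ β : ℝ} (hβδ : numFun q β = δ * Zfun q β) :
    entB q β = β * δ / Real.log 2 + Real.logb 2 (Zfun q β) := by
  have hZ := Zfun_pos hq β
  have hlog : ∀ i, Real.logb 2 (boltz q β i)
      = (-β * (leeW q i:ℝ)) / Real.log 2 - Real.logb 2 (Zfun q β) := by
    intro i
    unfold boltz
    rw [Real.logb_div (Real.exp_ne_zero _) hZ.ne', Real.logb, Real.log_exp]
  have hcong : ∀ i ∈ Finset.range q, boltz q β i * Real.logb 2 (boltz q β i)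
      = -(β / Real.log 2) * ((leeW q i:ℝ) * boltz q β i)
        - Real.logb 2 (Zfun q β) * boltz q β i := by
    intro i _; rw [hlog]; ring
  have hmd : ∀ i, (leeW q i:ℝ) * (Real.exp (-β * (leeW q i:ℝ)) / Zfun q β)
      = ((leeW q i:ℝ) * Real.exp (-β * (leeW q i:ℝ))) / Zfun q β :=
    fun i => (mul_div_assoc _ _ _).symm
  have h1 : ∑ i ∈ Finset.range q, (leeW q i:ℝ) * boltz q β i = δ := by
    unfold boltz
    simp only [hmd]
    rw [← Finset.sum_div]
    have : (∑ i ∈ Finset.range q, (leeW q i:ℝ) * Real.exp (-β * (leeW q i:ℝ))) = numFun q β := rfl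
    rw [this, hβδ, mul_div_assoc, div_self hZ.ne', mul_one]
  have h2 : ∑ i ∈ Finset.range q, boltz q β i = 1 := by
    unfold boltz
    rw [← Finset.sum_div]
    have : (∑ i ∈ Finset.range q, Real.exp (-β * (leeW q i:ℝ))) = Zfun q β := rfl
    rw [this, div_self hZ.ne']
  unfold entB
  rw [Finset.sum_congr rfl hcong, Finset.sum_sub_distrib, ← Finset.mul_sum, ← Finset.mul_sum,
    h1, h2]
  ring

lemma zmod_sum_val (q : ℕ) [NeZero q] (g : ℕ → ℝ) :
    ∑ a : ZMod q, g a.val = ∑ i ∈ Finset.range q, g i := by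
  apply Finset.sum_nbij' (i := fun (a : ZMod q) => a.val) (j := fun i => (i : ZMod q))
  · intro a _; simp [ZMod.val_lt]
  · intro i _; simp
  · intro a _; simp [ZMod.natCast_rightInverse a]
  · intro i hi; simp only [Finset.mem_range] at hi; rw [ZMod.val_cast_of_lt hi]
  · intro a _; rfl

lemma real_min_eq {q i : ℕ} (h : i < q) :
    min (i:ℝ) ((q:ℝ) - (i:ℝ)) = ((leeW q i : ℕ) : ℝ) := by
  rw [leeW, Nat.cast_min, Nat.cast_sub h.le]

set_option maxHeartbeats 1000000 in
lemma ball_card_le (q n : ℕ) [NeZero q] {β : ℝ} (hβ : 0 ≤ β) (L : ℕ) :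
    (Nat.card {v : Fin n → ZMod q // leeWtV v ≤ L} : ℝ)
      ≤ Real.exp (β * L) * (Zfun q β) ^ n := by
  classical
  have hz : ∀ v : Fin n → ZMod q,
      ∏ k, Real.exp (-β * (min (v k).val (q - (v k).val) : ℝ))
        = Real.exp (-β * (leeWtV v : ℝ)) := by
    intro v
    rw [← Real.exp_sum]
    congr 1
    unfold leeWtV
    push_cast
    rw [Finset.mul_sum]
    apply Finset.sum_congr rfl
    intro k _
    have h1 := ZMod.val_lt (v k)
    rw [Nat.cast_sub h1.le]
  have htot : ∑ v : Fin n → ZMod q, Real.exp (-β * (leeWtV v : ℝ)) = (Zfun q β) ^ n := by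
    rw [Finset.sum_congr rfl (fun v _ => (hz v).symm)]
    have h := Finset.prod_univ_sum (fun _ : Fin n => (Finset.univ : Finset (ZMod q)))
      (fun _ a => Real.exp (-β * (min a.val (q - a.val) : ℝ)))
    rw [Fintype.piFinset_univ] at h
    rw [← h]
    have hone : ∑ a : ZMod q, Real.exp (-β * (min a.val (q - a.val) : ℝ)) = Zfun q β := by
      rw [zmod_sum_val q (fun i => Real.exp (-β * min (i:ℝ) ((q:ℝ) - (i:ℝ))))]
      unfold Zfun
      apply Finset.sum_congr rfl
      intro i hi
      rw [real_min_eq (Finset.mem_range.mp hi)]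
    rw [Finset.prod_congr rfl (fun k _ => hone), Finset.prod_const, Finset.card_univ,
      Fintype.card_fin]
  have hcard : (Nat.card {v : Fin n → ZMod q // leeWtV v ≤ L})
      = (Finset.univ.filter (fun v : Fin n → ZMod q => leeWtV v ≤ L)).card := by
    rw [Nat.card_eq_fintype_card, Fintype.card_subtype]
  have hlow : (Finset.univ.filter (fun v : Fin n → ZMod q => leeWtV v ≤ L)).card
      • Real.exp (-β * L) ≤ ∑ v ∈ Finset.univ.filter (fun v : Fin n → ZMod q => leeWtV v ≤ L),
        Real.exp (-β * (leeWtV v : ℝ)) := by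
    apply Finset.card_nsmul_le_sum
    intro v hv
    simp only [Finset.mem_filter] at hv
    apply Real.exp_le_exp.mpr
    have : (leeWtV v : ℝ) ≤ (L : ℝ) := by exact_mod_cast hv.2
    nlinarith
  have hsub : ∑ v ∈ Finset.univ.filter (fun v : Fin n → ZMod q => leeWtV v ≤ L),
        Real.exp (-β * (leeWtV v : ℝ))
      ≤ ∑ v : Fin n → ZMod q, Real.exp (-β * (leeWtV v : ℝ)) := by
    apply Finset.sum_le_sum_of_subset_of_nonneg (Finset.filter_subset _ _)
    intro v _ _
    exact (Real.exp_pos _).le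
  have key : (Nat.card {v : Fin n → ZMod q // leeWtV v ≤ L} : ℝ) * Real.exp (-β * L)
      ≤ (Zfun q β) ^ n := by
    rw [hcard, ← nsmul_eq_mul]
    exact le_trans hlow (le_trans hsub (le_of_eq htot))
  have hexp : (0:ℝ) < Real.exp (-β * L) := Real.exp_pos _
  rw [← le_div_iff₀ hexp] at key
  calc (Nat.card {v : Fin n → ZMod q // leeWtV v ≤ L} : ℝ)
      ≤ (Zfun q β) ^ n / Real.exp (-β * L) := key
    _ = Real.exp (β * L) * (Zfun q β) ^ n := by
        rw [neg_mul, Real.exp_neg, div_eq_mul_inv, inv_inv, mul_comm]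

lemma nat_card_subtype_le {α : Type*} [Fintype α] (p : α → Prop) :
    Nat.card {a // p a} ≤ Nat.card α := by
  classical
  rw [Nat.card_eq_fintype_card, Nat.card_eq_fintype_card]
  exact Fintype.card_subtype_le p

def splitEquiv {V : Type*} {m : ℕ} (P : V → Prop) (j : Fin m) :
    {X : Fin m → V // P (X j)} ≃ {v : V // P v} × ({i : Fin m // i ≠ j} → V) where
  toFun X := (⟨X.1 j, X.2⟩, fun i => X.1 i.1)
  invFun p := ⟨fun i => if h : i = j then p.1.1 else p.2 ⟨i, h⟩, by simp [p.1.2]⟩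
  left_inv X := by
    apply Subtype.ext
    funext i
    by_cases h : i = j
    · subst h; simp
    · simp [h]
  right_inv p := by
    obtain ⟨⟨v, hv⟩, f⟩ := p
    refine Prod.ext ?_ ?_
    · apply Subtype.ext; simp
    · funext i; exact dif_neg i.2

lemma card_exists_le {V : Type*} [Fintype V] {m : ℕ} (P : V → Prop) :
    Nat.card {X : Fin m → V // ∃ j, P (X j)}
      ≤ m * (Nat.card {v // P v} * (Fintype.card V) ^ (m - 1)) := by
  classical
  rw [Nat.card_eq_fintype_card, Fintype.card_subtype]
  have hsub : (Finset.univ.filter (fun X : Fin m → V => ∃ j, P (X j)))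
      ⊆ Finset.univ.biUnion (fun j : Fin m =>
          Finset.univ.filter (fun X : Fin m → V => P (X j))) := by
    intro X hX
    simp only [Finset.mem_filter, Finset.mem_univ, true_and] at hX
    obtain ⟨j, hj⟩ := hX
    apply Finset.mem_biUnion.mpr
    exact ⟨j, Finset.mem_univ _, by simp [hj]⟩
  calc (Finset.univ.filter (fun X : Fin m → V => ∃ j, P (X j))).card
      ≤ (Finset.univ.biUnion (fun j : Fin m =>
          Finset.univ.filter (fun X : Fin m → V => P (X j)))).card :=
        Finset.card_le_card hsub
    _ ≤ ∑ j : Fin m, (Finset.univ.filter (fun X : Fin m → V => P (X j))).card :=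
        Finset.card_biUnion_le
    _ = ∑ j : Fin m, Nat.card {v // P v} * (Fintype.card V) ^ (m - 1) := by
        apply Finset.sum_congr rfl
        intro j _
        rw [← Fintype.card_subtype, Fintype.card_congr (splitEquiv P j),
          Fintype.card_prod, Fintype.card_fun, Nat.card_eq_fintype_card]
        congr 2
        rw [Fintype.card_subtype_compl, Fintype.card_subtype_eq, Fintype.card_fin]
    _ = m * (Nat.card {v // P v} * (Fintype.card V) ^ (m - 1)) := by
        rw [Finset.sum_const, Finset.card_univ, Fintype.card_fin, smul_eq_mul]

lemma two_rpow_nat_logb {c : ℝ} (hc : 0 < c) (n : ℕ) :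
    (2:ℝ) ^ ((n:ℝ) * Real.logb 2 c) = c ^ n := by
  rw [mul_comm, Real.rpow_mul (by norm_num : (0:ℝ) ≤ 2),
    Real.rpow_logb (by norm_num) (by norm_num) hc, Real.rpow_natCast]

lemma card_fun_zmod (q n : ℕ) [NeZero q] :
    Nat.card (Fin n → ZMod q) = q ^ n := by
  classical
  rw [Nat.card_eq_fintype_card, Fintype.card_fun, ZMod.card, Fintype.card_fin]

lemma ball_le_rpow (q n : ℕ) [NeZero q] (hq : 2 ≤ q) (hn : 1 ≤ n) (L : ℕ) :
    (Nat.card {v : Fin n → ZMod q // leeWtV v ≤ L} : ℝ)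
      ≤ (2:ℝ) ^ ((n:ℝ) * HplusOf q ((L:ℝ)/n)) := by
  have hn0 : ((n:ℝ)) ≠ 0 := by positivity
  rcases Nat.eq_zero_or_pos L with rfl | hL
  · have hqq : ((0:ℕ):ℝ)/(n:ℝ) = 0 := by simp
    rw [hqq, HplusOf, if_pos rfl, mul_zero, Real.rpow_zero]
    have hcard : Nat.card {v : Fin n → ZMod q // leeWtV v ≤ 0} = 1 := by
      rw [Nat.card_eq_one_iff_unique]
      have hzero : ∀ v : Fin n → ZMod q, leeWtV v ≤ 0 → v = 0 := by
        intro v hv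
        funext k
        have h0 : leeWtV v = 0 := Nat.le_zero.mp hv
        have := (Finset.sum_eq_zero_iff.mp h0) k (Finset.mem_univ k)
        have hlt := ZMod.val_lt (v k)
        have : (v k).val = 0 := by omega
        have := (ZMod.val_eq_zero (v k)).mp this
        simpa using this
      have h0mem : leeWtV (0 : Fin n → ZMod q) ≤ 0 := by
        unfold leeWtV
        apply le_of_eq
        apply Finset.sum_eq_zero
        intro k _
        simp [ZMod.val_zero]
      constructor
      · constructor
        intro a b
        apply Subtype.ext
        rw [hzero a.1 a.2, hzero b.1 b.2]
      · exact ⟨⟨0, h0mem⟩⟩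
    rw [hcard]
    norm_num
  · have hLpos : (0:ℝ) < (L:ℝ)/n := by positivity
    rcases le_or_gt ((L:ℝ)/n) (deltaQ q) with hcase | hcase
    · rw [HplusOf, if_neg hLpos.ne', if_pos hcase, Hof]
      have hE : ∃ β' : ℝ, numFun q β' = ((L:ℝ)/n) * Zfun q β' :=
        exists_beta hq hLpos hcase
      have hbeta : betaOf q ((L:ℝ)/n) = hE.choose := by
        rw [betaOf, dif_pos hE]
      set β' := hE.choose with hβ'
      have hspec : numFun q β' = ((L:ℝ)/n) * Zfun q β' := hE.choose_spec
      have hβ'0 : 0 ≤ β' := beta_nonneg hq hcase hspec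
      have hZ := Zfun_pos (by omega : 1 ≤ q) β'
      have hrw : (2:ℝ) ^ ((n:ℝ) * entB q β')
          = Real.exp (β' * L) * (Zfun q β') ^ n := by
        rw [entB_eq (by omega : 1 ≤ q) hspec, mul_add,
          Real.rpow_add (by norm_num : (0:ℝ) < 2)]
        congr 1
        · rw [Real.rpow_def_of_pos (by norm_num : (0:ℝ) < 2)]
          congr 1
          have hlog2 : Real.log 2 ≠ 0 := (Real.log_pos one_lt_two).ne'
          field_simp
        · exact two_rpow_nat_logb hZ n
      rw [hbeta, hrw]
      exact ball_card_le q n hβ'0 L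
    · rw [HplusOf, if_neg hLpos.ne', if_neg (not_le.mpr hcase)]
      have h1 : (Nat.card {v : Fin n → ZMod q // leeWtV v ≤ L} : ℝ) ≤ ((q:ℝ)) ^ n := by
        have := nat_card_subtype_le (fun v : Fin n → ZMod q => leeWtV v ≤ L)
        rw [card_fun_zmod q n] at this
        calc (Nat.card {v : Fin n → ZMod q // leeWtV v ≤ L} : ℝ)
            ≤ ((q ^ n : ℕ) : ℝ) := by exact_mod_cast this
          _ = ((q:ℝ)) ^ n := by push_cast; ring
      rw [two_rpow_nat_logb (by positivity : (0:ℝ) < (q:ℝ)) n]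
      exact h1

/-- Loosened random coding union bound for the memoryless Lee channel: with the
error vector `E` having i.i.d. `B_δ` entries and `M-1` i.i.d. uniform competing
codewords, the probability that some competitor is at Lee distance at most
`L = w_L(E)` from `y = x + E` is at most `E[2^{-n [log₂ q - H⁺_{L/n} - R₂]⁺}]`. -/

theorem stmt11 (q n M : ℕ) [NeZero q] (hq : 2 ≤ q) (hn : 1 ≤ n) (hM : 2 ≤ M)
    (δ β : ℝ) (hδ0 : 0 < δ) (hδ1 : δ ≤ deltaQ q)
    (hβ : numFun q β = δ * Zfun q β) (x : Fin n → ZMod q) :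
    ∑ e : Fin n → ZMod q, (∏ k, boltZ q β (e k)) *
        ((Nat.card {X : Fin (M - 1) → Fin n → ZMod q //
            ∃ j, leeWtV ((x + e) - X j) ≤ leeWtV e} : ℝ) / (q : ℝ) ^ (n * (M - 1)))
      ≤ ∑ e : Fin n → ZMod q, (∏ k, boltZ q β (e k)) *
          2 ^ (-(n : ℝ) * max 0 (Real.logb 2 q
              - HplusOf q ((leeWtV e : ℝ) / n) - Real.logb 2 M / n)) := by
  classical
  apply Finset.sum_le_sum
  intro e _
  have hq1 : 1 ≤ q := by omega
  have hprod : 0 ≤ ∏ k, boltZ q β (e k) := by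
    apply Finset.prod_nonneg
    intro k _
    exact div_nonneg (Real.exp_pos _).le (Zfun_pos hq1 β).le
  apply mul_le_mul_of_nonneg_left _ hprod
  set L := leeWtV e with hLdef
  set y := x + e with hy
  have hq0 : (0:ℝ) < (q:ℝ) := by positivity
  have hn0 : ((n:ℝ)) ≠ 0 := by positivity
  have hMr : (2:ℝ) ≤ (M:ℝ) := by exact_mod_cast hM
  have hMM : M - 1 - 1 = M - 2 := by omega
  have hexp : n * (M - 1) = n + n * (M - 2) := by
    have h : M - 1 = M - 2 + 1 := by omega
    rw [h, Nat.mul_add, mul_one, Nat.add_comm]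
  have hM1 : 1 ≤ M := by omega
  set K : ℕ := Nat.card {v : Fin n → ZMod q // leeWtV v ≤ L} with hK
  have hKball : Nat.card {v : Fin n → ZMod q // leeWtV (y - v) ≤ L} = K := by
    rw [hK]
    apply Nat.card_congr
    exact Equiv.subtypeEquiv (Equiv.subLeft y) (fun v => by simp [Equiv.subLeft])
  have hVcard : Fintype.card (Fin n → ZMod q) = q ^ n := by
    rw [Fintype.card_fun, ZMod.card, Fintype.card_fin]
  have hcount : Nat.card {X : Fin (M - 1) → Fin n → ZMod q //
      ∃ j, leeWtV (y - X j) ≤ L} ≤ (M - 1) * (K * (q ^ n) ^ (M - 2)) := by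
    have := card_exists_le (V := Fin n → ZMod q) (m := M - 1)
      (fun v => leeWtV (y - v) ≤ L)
    rw [hKball, hVcard, hMM] at this
    exact this
  have htriv : Nat.card {X : Fin (M - 1) → Fin n → ZMod q //
      ∃ j, leeWtV (y - X j) ≤ L} ≤ q ^ (n * (M - 1)) := by
    calc Nat.card {X : Fin (M - 1) → Fin n → ZMod q // ∃ j, leeWtV (y - X j) ≤ L}
        ≤ Nat.card (Fin (M - 1) → Fin n → ZMod q) := nat_card_subtype_le _
      _ = q ^ (n * (M - 1)) := by
          rw [Nat.card_eq_fintype_card, Fintype.card_fun, hVcard, Fintype.card_fin,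
            ← pow_mul]
  set A : ℝ := Real.logb 2 q - HplusOf q ((L:ℝ)/n) - Real.logb 2 M / n with hA
  have hpowpos : (0:ℝ) < (q:ℝ) ^ (n * (M - 1)) := by positivity
  rcases le_or_gt A 0 with hAle | hAgt
  · rw [max_eq_left hAle, mul_zero, Real.rpow_zero]
    rw [div_le_one hpowpos]
    calc (Nat.card {X : Fin (M - 1) → Fin n → ZMod q //
          ∃ j, leeWtV (y - X j) ≤ L} : ℝ)
        ≤ ((q ^ (n * (M - 1)) : ℕ) : ℝ) := by exact_mod_cast htriv
      _ = (q:ℝ) ^ (n * (M - 1)) := by push_cast; ring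
  · rw [max_eq_right hAgt.le]
    set H : ℝ := HplusOf q ((L:ℝ)/n) with hH
    have hball : (K:ℝ) ≤ (2:ℝ) ^ ((n:ℝ) * H) := ball_le_rpow q n hq hn L
    have hrhs : (2:ℝ) ^ (-(n:ℝ) * A)
        = (2:ℝ) ^ ((n:ℝ) * H) * (M:ℝ) / (q:ℝ) ^ n := by
      have h2 : -(n:ℝ) * A = (n:ℝ) * H + Real.logb 2 M + -((n:ℝ) * Real.logb 2 q) := by
        rw [hA]
        field_simp
        ring
      rw [h2, Real.rpow_add (by norm_num : (0:ℝ) < 2),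
        Real.rpow_add (by norm_num : (0:ℝ) < 2),
        Real.rpow_neg (by norm_num : (0:ℝ) ≤ 2),
        Real.rpow_logb (by norm_num) (by norm_num) (by linarith : (0:ℝ) < (M:ℝ)),
        two_rpow_nat_logb hq0 n]
      rw [div_eq_mul_inv]
    rw [hrhs]
    have hsplit : (q:ℝ) ^ (n * (M - 1)) = (q:ℝ) ^ n * (q:ℝ) ^ (n * (M - 2)) := by
      rw [← pow_add, hexp]
    have hcR : (Nat.card {X : Fin (M - 1) → Fin n → ZMod q //
        ∃ j, leeWtV (y - X j) ≤ L} : ℝ)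
        ≤ ((M:ℝ) - 1) * ((K:ℝ) * (q:ℝ) ^ (n * (M - 2))) := by
      have h1 : (((M - 1) * (K * (q ^ n) ^ (M - 2)) : ℕ) : ℝ)
          = ((M:ℝ) - 1) * ((K:ℝ) * (q:ℝ) ^ (n * (M - 2))) := by
        push_cast [Nat.cast_sub hM1]
        rw [← pow_mul]
      rw [← h1]
      exact_mod_cast hcount
    rw [hsplit]
    rw [div_le_div_iff₀ (by positivity) (by positivity)]
    have hK0 : (0:ℝ) ≤ (K:ℝ) := by positivity
    have h2n : (0:ℝ) ≤ (2:ℝ) ^ ((n:ℝ) * H) := by positivity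
    calc (Nat.card {X : Fin (M - 1) → Fin n → ZMod q //
          ∃ j, leeWtV (y - X j) ≤ L} : ℝ) * (q:ℝ) ^ n
        ≤ (((M:ℝ) - 1) * ((K:ℝ) * (q:ℝ) ^ (n * (M - 2)))) * (q:ℝ) ^ n := by
          apply mul_le_mul_of_nonneg_right hcR (by positivity)
      _ ≤ ((M:ℝ) * ((2:ℝ) ^ ((n:ℝ) * H) * (q:ℝ) ^ (n * (M - 2)))) * (q:ℝ) ^ n := by
          apply mul_le_mul_of_nonneg_right _ (by positivity)
          apply mul_le_mul (by linarith) _ (by positivity) (by linarith)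
          exact mul_le_mul_of_nonneg_right hball (by positivity)
      _ = (2:ℝ) ^ ((n:ℝ) * H) * (M:ℝ) * ((q:ℝ) ^ n * (q:ℝ) ^ (n * (M - 2))) := by
          ring
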